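/- Let m be a 2×2 complex matrix with m* = m (Hermitian), so that det m and tr m are real. Then there exists s ∈ ℂ² with m_{ij} = s_i · conj(s_j) for all i, j (i.e. m = s s*) if and only if det m = 0 and tr m ≥ 0. In other words, the image of the spinor squaring map σ(s) = s s* is exactly the forward light cone in ℝ^{3,1}. -/

import Mathlib

open Matrix

/-- A Hermitian 2×2 complex matrix `m` is of the form `s s*` for some `s ∈ ℂ²` if and only if
`det m = 0` and `tr m ≥ 0`: the image of the spinor squaring map `σ(s) = s s*` is exactly
the forward light cone in `ℝ^{3,1}` (the Hermitian 2×2 matrices with `-det` as quadratic form). -/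
theorem spinor_squaring_image_R31 (m : Matrix (Fin 2) (Fin 2) ℂ) (hm : mᴴ = m) :
    (∃ s : Fin 2 → ℂ, ∀ i j, m i j = s i * star (s j)) ↔ (m.det = 0 ∧ 0 ≤ m.trace.re) := by
  constructor
  · rintro ⟨s, hs⟩
    constructor
    · rw [Matrix.det_fin_two, hs 0 0, hs 1 1, hs 0 1, hs 1 0]; ring
    · rw [Matrix.trace_fin_two, hs 0 0, hs 1 1]
      simp only [Complex.star_def, Complex.mul_conj, ← Complex.ofReal_add, Complex.ofReal_re]
      exact add_nonneg (Complex.normSq_nonneg _) (Complex.normSq_nonneg _)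
      
  · rintro ⟨hdet, htr⟩
    have h00 := congrFun (congrFun hm 0) 0
    have h11 := congrFun (congrFun hm 1) 1
    have h10 := congrFun (congrFun hm 1) 0
    simp only [Matrix.conjTranspose_apply] at h00 h11 h10
    set a := (m 0 0).re with ha
    set d := (m 1 1).re with hd
    have hm00 : m 0 0 = (a : ℂ) := by
      apply Complex.ext <;> simp [ha]
      have := congrArg Complex.im h00
      simp [Complex.star_def] at this
      linarith
    have hm11 : m 1 1 = (d : ℂ) := by
      apply Complex.ext <;> simp [hd]
      have := congrArg Complex.im h11
      simp [Complex.star_def] at this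
      linarith
    rw [Matrix.det_fin_two, hm00, hm11, ← h10] at hdet
    have key : (a : ℂ) * d = m 0 1 * star (m 0 1) := by linear_combination hdet
    have hprod : a * d = Complex.normSq (m 0 1) := by
      have := key
      rw [Complex.star_def, Complex.mul_conj, ← Complex.ofReal_mul] at this
      exact_mod_cast this
    have htr' : 0 ≤ a + d := by
      rw [Matrix.trace_fin_two, Complex.add_re] at htr; exact htr
    have hns := Complex.normSq_nonneg (m 0 1)
    have ha0 : 0 ≤ a := by nlinarith
    have hd0 : 0 ≤ d := by nlinarith
    by_cases hA : a = 0
    · have hb : m 0 1 = 0 := by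
        have : Complex.normSq (m 0 1) = 0 := by rw [← hprod, hA]; ring
        exact Complex.normSq_eq_zero.mp this
      refine ⟨![0, (Real.sqrt d : ℂ)], ?_⟩
      intro i j
      fin_cases i <;> fin_cases j <;>
        simp [hm00, hm11, hA, hb, ← h10, Complex.star_def, Complex.conj_ofReal,
          ← Complex.ofReal_mul, Real.mul_self_sqrt hd0]
    · refine ⟨![(Real.sqrt a : ℂ), star (m 0 1) / (Real.sqrt a : ℂ)], ?_⟩
      have hsa : (Real.sqrt a : ℂ) ≠ 0 := by
        exact Complex.ofReal_ne_zero.mpr (Real.sqrt_ne_zero'.mpr (lt_of_le_of_ne ha0 (Ne.symm hA)))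
      have hsq : (Real.sqrt a : ℂ) * (Real.sqrt a : ℂ) = (a : ℂ) := by
        rw [← Complex.ofReal_mul, Real.mul_self_sqrt ha0]
      intro i j
      fin_cases i <;> fin_cases j <;>
        simp only [Fin.zero_eta, Fin.mk_one, Matrix.cons_val_zero, Matrix.cons_val_one, Matrix.head_cons, star_div₀,
          star_star, Complex.star_def, Complex.conj_conj, Complex.conj_ofReal]
      · rw [hm00, ← Complex.ofReal_mul, Real.mul_self_sqrt ha0]
      · field_simp
      · rw [← h10]; field_simp; rfl
      · rw [hm11, div_mul_div_comm, hsq, eq_div_iff (Complex.ofReal_ne_zero.mpr hA)]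
        simp only [Complex.star_def] at hdet
        linear_combination hdet
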